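/- Let N ≥ 1. The set of vectors x : ZMod N → ℂ such that ŷ[k] ≠ 0 and ẑ[k] ≠ 0 for all k ∈ ZMod N — where y_j = |x_j|² and z_k = |x̂[k]|² — is open and dense in ℂ^N. That is, for generic x ∈ ℂ^N, both the vector of squared magnitudes and the vector of squared Fourier magnitudes have nonvanishing discrete Fourier transform. -/

import Mathlib

open ZMod

section BispectralAux

open Complex Finset

variable {N : ℕ} [NeZero N]

private lemma abs_sq_eq' (z : ℂ) : ((‖z‖ : ℂ)) ^ 2 = z * (starRingEnd ℂ) z := by
  rw [← Complex.ofReal_pow, Complex.sq_norm, Complex.mul_conj]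

private lemma continuous_dft_eval' {f : (ZMod N → ℂ) → ZMod N → ℂ}
    (hf : ∀ t, Continuous fun x => f x t) (k : ZMod N) :
    Continuous fun x => dft (f x) k := by
  simp only [dft_apply]
  exact continuous_finset_sum _ fun j _ => by have := hf j; fun_prop

private lemma sum_char' (k : ZMod N) :
    ∑ j : ZMod N, (stdAddChar (-(j * k)) : ℂ) = if k = 0 then (N : ℂ) else 0 := by
  have h := AddChar.sum_mulShift (ψ := stdAddChar (N := N)) (-k) (isPrimitive_stdAddChar N)
  simp only [mul_neg, neg_eq_zero, ZMod.card] at h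
  rw [Nat.cast_ite, Nat.cast_zero] at h
  simpa only [neg_mul, mul_comm] using h

private lemma dft_ite' (c d : ℂ) (k : ZMod N) :
    dft (fun t : ZMod N => if t = 0 then c else d) k
      = (c - d) + if k = 0 then (N : ℂ) * d else 0 := by
  rw [dft_apply]
  have h : ∀ j : ZMod N, stdAddChar (-(j * k)) • (if j = 0 then c else d)
      = (if j = 0 then (c - d) else 0) + stdAddChar (-(j * k)) * d := by
    intro j
    rcases eq_or_ne j 0 with hj | hj
    · simp [hj]
    · simp [hj, smul_eq_mul]
  rw [Finset.sum_congr rfl fun j _ => h j, Finset.sum_add_distrib,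
    Finset.sum_ite_eq' univ (0 : ZMod N) (fun _ => c - d), ← Finset.sum_mul, sum_char']
  simp [ite_mul]

private noncomputable def wit (N : ℕ) : ZMod N → ℂ := fun t => if t = 0 then 2 else 1

private lemma witY' (k : ZMod N) : dft (fun t => wit N t * (starRingEnd ℂ) (wit N t)) k ≠ 0 := by
  have hfun : (fun t : ZMod N => wit N t * (starRingEnd ℂ) (wit N t))
      = fun t : ZMod N => if t = 0 then (4 : ℂ) else 1 := by
    funext t
    rcases eq_or_ne t 0 with h | h <;> simp [wit, h, Complex.conj_ofNat]
    norm_num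
  rw [hfun, dft_ite']
  rcases eq_or_ne k 0 with h | h
  · rw [h, if_pos rfl, mul_one]
    have : (4 : ℂ) - 1 + (N : ℂ) = ((3 + N : ℕ) : ℂ) := by push_cast; ring
    rw [this, Nat.cast_ne_zero]
    omega
  · rw [if_neg h, add_zero]
    norm_num

private lemma dft_wit' (t : ZMod N) : dft (wit N) t = if t = 0 then (N : ℂ) + 1 else 1 := by
  rw [show wit N = fun t : ZMod N => if t = 0 then (2 : ℂ) else 1 from rfl, dft_ite']
  rcases eq_or_ne t 0 with h | h <;> simp [h] <;> ring

private lemma witZ' (k : ZMod N) :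
    dft (fun t => dft (wit N) t * (starRingEnd ℂ) (dft (wit N) t)) k ≠ 0 := by
  have hfun : (fun t : ZMod N => dft (wit N) t * (starRingEnd ℂ) (dft (wit N) t))
      = fun t : ZMod N => if t = 0 then ((N : ℂ) + 1) ^ 2 else 1 := by
    funext t
    rw [dft_wit']
    rcases eq_or_ne t 0 with h | h <;> simp [h] <;> ring
  rw [hfun, dft_ite']
  have hN : 1 ≤ N := Nat.one_le_iff_ne_zero.mpr (NeZero.ne N)
  rcases eq_or_ne k 0 with h | h
  · rw [h, if_pos rfl, mul_one]
    have : ((N : ℂ) + 1) ^ 2 - 1 + (N : ℂ) = ((N ^ 2 + 3 * N : ℕ) : ℂ) := by push_cast; ring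
    rw [this, Nat.cast_ne_zero]
    nlinarith
  · rw [if_neg h, add_zero]
    have : ((N : ℂ) + 1) ^ 2 - 1 = ((N ^ 2 + 2 * N : ℕ) : ℂ) := by push_cast; ring
    rw [this, Nat.cast_ne_zero]
    nlinarith

private lemma quad' (a b : ZMod N → ℂ) (s : ℝ) (k : ZMod N) :
    dft (fun t => ((‖a t + (s : ℂ) * b t‖ : ℂ)) ^ 2) k
      = dft (fun t => a t * (starRingEnd ℂ) (a t)) k
        + (s : ℂ) * dft (fun t => a t * (starRingEnd ℂ) (b t) + b t * (starRingEnd ℂ) (a t)) k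
        + (s : ℂ) ^ 2 * dft (fun t => b t * (starRingEnd ℂ) (b t)) k := by
  have hfun : (fun t => ((‖a t + (s : ℂ) * b t‖ : ℂ)) ^ 2)
      = (fun t => a t * (starRingEnd ℂ) (a t))
        + (s : ℂ) • (fun t => a t * (starRingEnd ℂ) (b t) + b t * (starRingEnd ℂ) (a t))
        + ((s : ℂ) ^ 2) • (fun t => b t * (starRingEnd ℂ) (b t)) := by
    funext t
    simp only [Pi.add_apply, Pi.smul_apply, smul_eq_mul, abs_sq_eq', map_add, map_mul,
      Complex.conj_ofReal]
    ring
  rw [hfun, map_add, map_add, LinearEquiv.map_smul, LinearEquiv.map_smul]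
  simp [smul_eq_mul]

private lemma finite_bad' (A B C : ℂ) (hC : C ≠ 0) :
    {s : ℝ | A + (s : ℂ) * B + (s : ℂ) ^ 2 * C = 0}.Finite := by
  set p : Polynomial ℂ := Polynomial.C A + Polynomial.C B * Polynomial.X
    + Polynomial.C C * Polynomial.X ^ 2 with hp
  have hp0 : p ≠ 0 := by
    intro h0
    apply hC
    have := congrArg (fun q => Polynomial.coeff q 2) h0
    simpa [hp, Polynomial.coeff_C] using this
  have hfin := Polynomial.finite_setOf_isRoot hp0
  have hsub : {s : ℝ | A + (s : ℂ) * B + (s : ℂ) ^ 2 * C = 0}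
      ⊆ (fun s : ℝ => (s : ℂ)) ⁻¹' {z : ℂ | p.IsRoot z} := by
    intro s hs
    simp only [Set.mem_preimage, Set.mem_setOf_eq, Polynomial.IsRoot, hp] at *
    simp only [Polynomial.eval_add, Polynomial.eval_mul, Polynomial.eval_C, Polynomial.eval_pow,
      Polynomial.eval_X]
    linear_combination hs
  exact Set.Finite.subset (Set.Finite.preimage (Complex.ofReal_injective.injOn) hfin) hsub

end BispectralAux

/-- **Genericity of nonvanishing bispectral data.** The set of `x : ZMod N → ℂ` such
that both the DFT of the squared magnitudes `y_j = |x_j|²` and the DFT of the squared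
Fourier magnitudes `z_k = |x̂[k]|²` are everywhere nonvanishing is open and dense in
`ℂ^N` (with its standard topology). -/
theorem generic_nonvanishing_bispectral_data {N : ℕ} [NeZero N] :
    IsOpen {x : ZMod N → ℂ |
        (∀ k : ZMod N, dft (fun t => ((‖x t‖ : ℂ)) ^ 2) k ≠ 0) ∧
        (∀ k : ZMod N, dft (fun t => ((‖dft x t‖ : ℂ)) ^ 2) k ≠ 0)} ∧
      Dense {x : ZMod N → ℂ |
        (∀ k : ZMod N, dft (fun t => ((‖x t‖ : ℂ)) ^ 2) k ≠ 0) ∧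
        (∀ k : ZMod N, dft (fun t => ((‖dft x t‖ : ℂ)) ^ 2) k ≠ 0)} := by
  set S : Set (ZMod N → ℂ) := {x : ZMod N → ℂ |
        (∀ k : ZMod N, dft (fun t => ((‖x t‖ : ℂ)) ^ 2) k ≠ 0) ∧
        (∀ k : ZMod N, dft (fun t => ((‖dft x t‖ : ℂ)) ^ 2) k ≠ 0)} with hS
  -- continuity facts
  have habs : ∀ (f : (ZMod N → ℂ) → ZMod N → ℂ), (∀ t, Continuous fun x => f x t) →
      ∀ t, Continuous fun x => ((‖f x t‖ : ℂ)) ^ 2 := by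
    intro f hf t
    have : (fun x : ZMod N → ℂ => ((‖f x t‖ : ℂ)) ^ 2)
        = fun x => f x t * (starRingEnd ℂ) (f x t) := by
      funext x; exact abs_sq_eq' _
    rw [this]
    exact (hf t).mul (Complex.continuous_conj.comp (hf t))
  have hcont1 : ∀ k : ZMod N,
      Continuous fun x : ZMod N → ℂ => dft (fun t => ((‖x t‖ : ℂ)) ^ 2) k :=
    fun k => continuous_dft_eval' (habs (fun x => x) (fun t => continuous_apply t)) k
  have hdftc : ∀ t : ZMod N, Continuous fun x : ZMod N → ℂ => dft x t :=
    fun t => continuous_dft_eval' (fun t' => continuous_apply t') t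
  have hcont2 : ∀ k : ZMod N,
      Continuous fun x : ZMod N → ℂ => dft (fun t => ((‖dft x t‖ : ℂ)) ^ 2) k :=
    fun k => continuous_dft_eval' (habs (fun x => dft x) hdftc) k
  constructor
  · have hrw : S = (⋂ k : ZMod N,
        {x : ZMod N → ℂ | dft (fun t => ((‖x t‖ : ℂ)) ^ 2) k ≠ 0})
        ∩ ⋂ k : ZMod N,
        {x : ZMod N → ℂ | dft (fun t => ((‖dft x t‖ : ℂ)) ^ 2) k ≠ 0} := by
      ext x
      simp [hS, Set.mem_iInter]
    rw [hrw]
    refine IsOpen.inter (isOpen_iInter_of_finite fun k => ?_)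
      (isOpen_iInter_of_finite fun k => ?_)
    · exact isOpen_compl_singleton.preimage (hcont1 k)
    · exact isOpen_compl_singleton.preimage (hcont2 k)
  · rw [Metric.dense_iff]
    intro x ε hε
    set w := wit N with hw
    -- bad sets
    set badY : ZMod N → Set ℝ := fun k => {s : ℝ |
      dft (fun t => x t * (starRingEnd ℂ) (x t)) k
        + (s : ℂ) * dft (fun t => x t * (starRingEnd ℂ) (w t) + w t * (starRingEnd ℂ) (x t)) k
        + (s : ℂ) ^ 2 * dft (fun t => w t * (starRingEnd ℂ) (w t)) k = 0} with hbadY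
    set badZ : ZMod N → Set ℝ := fun k => {s : ℝ |
      dft (fun t => dft x t * (starRingEnd ℂ) (dft x t)) k
        + (s : ℂ) * dft (fun t => dft x t * (starRingEnd ℂ) (dft w t)
            + dft w t * (starRingEnd ℂ) (dft x t)) k
        + (s : ℂ) ^ 2 * dft (fun t => dft w t * (starRingEnd ℂ) (dft w t)) k = 0} with hbadZ
    have hfin : ((⋃ k : ZMod N, badY k) ∪ ⋃ k : ZMod N, badZ k).Finite := by
      refine Set.Finite.union (Set.finite_iUnion fun k => ?_) (Set.finite_iUnion fun k => ?_)
      · exact finite_bad' _ _ _ (witY' k)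
      · exact finite_bad' _ _ _ (witZ' k)
    set δ := min (ε / (‖w‖ + 1)) 1 with hδ
    have hwpos : (0 : ℝ) < ‖w‖ + 1 := by positivity
    have hδpos : 0 < δ := by
      apply lt_min _ one_pos
      positivity
    obtain ⟨s, hs⟩ : ((Set.Ioo (0 : ℝ) δ) \ ((⋃ k : ZMod N, badY k) ∪ ⋃ k : ZMod N, badZ k)).Nonempty := by
      refine Set.Infinite.nonempty (Set.Infinite.diff ?_ hfin)
      exact Set.Ioo_infinite hδpos
    obtain ⟨⟨hs0, hsδ⟩, hsbad⟩ := hs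
    refine ⟨x + s • w, ?_, ?_⟩
    · -- in the ball
      rw [Metric.mem_ball, dist_eq_norm]
      have : x + s • w - x = s • w := by abel
      rw [this, norm_smul, Real.norm_eq_abs, abs_of_pos hs0]
      calc s * ‖w‖ ≤ s * (‖w‖ + 1) := by nlinarith [norm_nonneg w]
        _ < δ * (‖w‖ + 1) := by nlinarith
        _ ≤ (ε / (‖w‖ + 1)) * (‖w‖ + 1) := by
            have := min_le_left (ε / (‖w‖ + 1)) 1
            nlinarith
        _ = ε := by field_simp
    · -- in S
      have hsY : s ∉ ⋃ k : ZMod N, badY k := fun h => hsbad (Set.mem_union_left _ h)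
      have hsZ : s ∉ ⋃ k : ZMod N, badZ k := fun h => hsbad (Set.mem_union_right _ h)
      rw [Set.mem_iUnion] at hsY hsZ
      push_neg at hsY hsZ
      constructor
      · intro k
        have heval : (fun t => ((‖(x + s • w) t‖ : ℂ)) ^ 2)
            = fun t => ((‖x t + (s : ℂ) * w t‖ : ℂ)) ^ 2 := by
          funext t
          simp [Complex.real_smul]
        rw [heval, quad']
        intro h0
        exact hsY k h0
      · intro k
        have hdfts : dft (x + s • w) = fun t => dft x t + (s : ℂ) * dft w t := by
          have : dft (x + s • w) = dft x + s • dft w := by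
            rw [map_add, dft_const_smul]
          rw [this]
          funext t
          simp [Complex.real_smul]
        have heval : (fun t => ((‖dft (x + s • w) t‖ : ℂ)) ^ 2)
            = fun t => ((‖dft x t + (s : ℂ) * dft w t‖ : ℂ)) ^ 2 := by
          funext t
          rw [hdfts]
        rw [heval, quad']
        intro h0
        exact hsZ k h0
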